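/- arXiv:1911.06985 — 8 statements merged into one kernel-verified Lean document; each statement's English description precedes it below -/
import Mathlib

section
/- Let T be a nonempty string whose Lyndon factorization, grouped into maximal runs of equal factors, is T = T_1^{τ_1} T_2^{τ_2} ··· T_t^{τ_t} with T_1 ≻_lex T_2 ≻_lex ··· ≻_lex T_t pairwise distinct Lyndon words and each τ_x ≥ 1, and let R = T_1 T_2 ··· T_t. List all conjugates of all Lyndon factors T_1, ..., T_t of R as c_1, c_2, ..., c_{|R|} in ≺_ω-increasing order (this order is strict by the pairwise distinctness of the ω-powers of these conjugates). Then BBWT(T) equals the concatenation, for k = 1, ..., |R|, of the last character of c_k repeated τ_{x(k)} times, where x(k) is the index of the Lyndon factor of which c_k is a conjugate. -/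
open List

variable {α : Type*} [LinearOrder α]

/-- A nonempty string is a Lyndon word if it is lexicographically strictly smaller than
each of its nonempty proper suffixes. -/
def IsLyndon (w : List α) : Prop :=
  w ≠ [] ∧ ∀ s : List α, s ≠ [] → s ≠ w → s <:+ w → List.Lex (· < ·) w s

/-- Lexicographic order on infinite words `ℕ → α`. -/
def InfLexLt (u v : ℕ → α) : Prop :=
  ∃ n : ℕ, (∀ m < n, u m = v m) ∧ u n < v n

/-- The infinite periodic word `S^ω` associated with a (nonempty) string `S`. -/
def omegaWord [Inhabited α] (S : List α) : ℕ → α :=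
  fun n => S.getD (n % S.length) default

/-- `S ≺_ω T` iff `S^ω` is lexicographically smaller than `T^ω`. -/
def OmegaLt [Inhabited α] (S T : List α) : Prop :=
  InfLexLt (omegaWord S) (omegaWord T)

open Classical in
/-- The length of the longest Lyndon prefix of `T`. -/
noncomputable def lynPrefixLen (T : List α) : ℕ :=
  sSup {k | k ≤ T.length ∧ IsLyndon (T.take k)}

/-- Greedy computation of the Lyndon factorization (with fuel). -/
noncomputable def lynGo : ℕ → List α → List (List α)
  | 0, _ => []
  | n + 1, T =>
    if T = [] then []
    else T.take (max 1 (lynPrefixLen T)) :: lynGo n (T.drop (max 1 (lynPrefixLen T)))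

/-- The Lyndon factorization of `T`: repeatedly cut off the longest Lyndon prefix. -/
noncomputable def lyndonFactorization (T : List α) : List (List α) :=
  lynGo T.length T

open Classical in
/-- The bijective Burrows–Wheeler transform: last characters of all conjugates of all
Lyndon factors of `T`, listed in `≺_ω`-nondecreasing order. -/
noncomputable def BBWT [Inhabited α] (T : List α) : List α :=
  (((lyndonFactorization T).flatMap
      (fun w => (List.range w.length).map (fun i => w.drop i ++ w.take i))).mergeSort
      (fun a b => decide (¬ OmegaLt b a))).map (fun w => w.getLastD default)


/-! ### Auxiliary lemmas -/

section Aux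
variable {β : Type*}

/-- proper-prefix implies lex-lt -/
lemma lex_append_right' (p : List α) {s : List α} (hs : s ≠ []) :
    List.Lex (· < ·) p (p ++ s) := by
  induction p with
  | nil =>
    cases s with
    | nil => exact absurd rfl hs
    | cons a l => exact List.Lex.nil
  | cons a l ih => exact List.Lex.cons ih

lemma lex_of_prefix {p w : List α} (h : p <+: w) (hne : p ≠ w) : List.Lex (· < ·) p w := by
  obtain ⟨s, rfl⟩ := h
  rcases eq_or_ne s [] with rfl | hs
  · simp at hne
  · exact lex_append_right' p hs

lemma lex_asymm {u v : List α} (h : List.Lex (· < ·) u v) (h2 : List.Lex (· < ·) v u) :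
    False := absurd h2 (Std.Asymm.asymm _ _ h)

lemma lex_trans' {u v w : List α} (h : List.Lex (· < ·) u v) (h2 : List.Lex (· < ·) v w) :
    List.Lex (· < ·) u w := List.lex_trans lt_trans h h2

/-- combined lex-lt with lex-le (le as lt-or-eq) -/
lemma lex_lt_of_lt_of_le {u v w : List α} (h : List.Lex (· < ·) u v)
    (h2 : List.Lex (· < ·) v w ∨ v = w) : List.Lex (· < ·) u w := by
  rcases h2 with h2 | rfl
  · exact lex_trans' h h2
  · exact h

lemma infLexLt_irrefl (u : ℕ → α) : ¬ InfLexLt u u := by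
  rintro ⟨n, _, hn⟩; exact lt_irrefl _ hn

lemma infLexLt_trans {u v w : ℕ → α} (h1 : InfLexLt u v) (h2 : InfLexLt v w) :
    InfLexLt u w := by
  obtain ⟨n1, he1, hl1⟩ := h1
  obtain ⟨n2, he2, hl2⟩ := h2
  rcases lt_trichotomy n1 n2 with h | rfl | h
  · exact ⟨n1, fun m hm => (he1 m hm).trans (he2 m (hm.trans h)),
      lt_of_lt_of_eq hl1 (he2 n1 h)⟩
  · exact ⟨n1, fun m hm => (he1 m hm).trans (he2 m hm), hl1.trans hl2⟩
  · exact ⟨n2, fun m hm => (he1 m (hm.trans h)).trans (he2 m hm),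
      lt_of_eq_of_lt (he1 n2 h) hl2⟩

lemma infLexLt_total {u v : ℕ → α} (h1 : ¬ InfLexLt u v) (h2 : ¬ InfLexLt v u) : u = v := by
  by_contra hne
  have hex : ∃ n, u n ≠ v n := by
    by_contra h
    push_neg at h
    exact hne (funext h)
  classical
  have hfind := Nat.find_spec hex
  have hmin : ∀ m < Nat.find hex, u m = v m := fun m hm => by
    by_contra hc; exact Nat.find_min hex hm hc
  rcases lt_or_gt_of_ne hfind with h | h
  · exact h1 ⟨Nat.find hex, hmin, h⟩
  · exact h2 ⟨Nat.find hex, fun m hm => (hmin m hm).symm, h⟩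

end Aux

set_option linter.unusedSectionVars false

lemma getElem_idx_congr {β : Type*} {l : List β} {i j : ℕ} (h : i = j) (hi : i < l.length) :
    l[i] = l[j]'(h ▸ hi) := by subst h; rfl

section Omega
variable [Inhabited α]

lemma omegaWord_of_lt {S : List α} {n : ℕ} (hn : n < S.length) :
    omegaWord S n = S[n] := by
  rw [omegaWord, Nat.mod_eq_of_lt hn, List.getD_eq_getElem _ _ hn]

lemma omegaWord_period (S : List α) (n : ℕ) :
    omegaWord S (n + S.length) = omegaWord S n := by
  simp [omegaWord, Nat.add_mod_right]

/-- ω-word of a rotation is the shift of the ω-word. -/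
lemma omegaWord_rot {w : List α} (hw : w ≠ []) {i : ℕ} (hi : i < w.length) (n : ℕ) :
    omegaWord (w.drop i ++ w.take i) n = omegaWord w (n + i) := by
  set p := w.length with hp
  have hppos : 0 < p := List.length_pos_iff.mpr hw
  have hlen : (w.drop i ++ w.take i).length = p := by
    simp only [List.length_append, List.length_drop, List.length_take, ← hp]
    omega
  set m := n % p with hmdef
  have hmlt : m < p := Nat.mod_lt _ hppos
  have key : (n + i) % p = (m + i) % p := by
    conv_lhs => rw [Nat.add_mod, ← hmdef, Nat.mod_eq_of_lt hi]
  have hmlt' : n % (w.drop i ++ w.take i).length < (w.drop i ++ w.take i).length := by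
    rw [hlen]; exact hmlt
  have hr : (n + i) % p < w.length := Nat.mod_lt _ hppos
  rw [omegaWord, omegaWord, List.getD_eq_getElem _ _ hmlt', List.getD_eq_getElem _ _ hr]
  have hidx : n % (w.drop i ++ w.take i).length = m := by rw [hlen]
  by_cases h : m + i < p
  · have h1 : (n + i) % p = m + i := by rw [key]; exact Nat.mod_eq_of_lt h
    have hd' : n % (w.drop i ++ w.take i).length < (w.drop i).length := by
      rw [hidx]; simp only [List.length_drop, ← hp]; omega
    rw [List.getElem_append_left hd', List.getElem_drop]
    exact getElem_idx_congr (by rw [hidx, h1]; omega) _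
  · have h1 : (n + i) % p = m + i - p := by
      rw [key, Nat.mod_eq_sub_mod (by omega)]
      exact Nat.mod_eq_of_lt (by omega)
    have hd' : (w.drop i).length ≤ n % (w.drop i ++ w.take i).length := by
      rw [hidx]; simp only [List.length_drop, ← hp]; omega
    rw [List.getElem_append_right hd', List.getElem_take]
    exact getElem_idx_congr (by rw [hidx, h1]; simp only [List.length_drop, ← hp]; omega) _
end Omega

section Periods
variable {β : Type*}

lemma period_sub {u : ℕ → β} {p q : ℕ} (hpq : p ≤ q)
    (hp : ∀ n, u (n + p) = u n) (hq : ∀ n, u (n + q) = u n) :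
    ∀ n, u (n + (q - p)) = u n := by
  intro n
  have : u (n + (q - p) + p) = u (n + (q - p)) := hp _
  rw [show n + (q - p) + p = n + q by omega] at this
  rw [← this, hq]

lemma period_mod {u : ℕ → β} (p : ℕ) {q : ℕ}
    (hp : ∀ n, u (n + p) = u n) (hq : ∀ n, u (n + q) = u n) :
    ∀ n, u (n + q % p) = u n := by
  rcases Nat.eq_zero_or_pos p with rfl | hppos
  · simpa using hq
  induction q using Nat.strong_induction_on with
  | _ q ih =>
    by_cases h : q < p
    · rw [Nat.mod_eq_of_lt h]; exact hq
    · rw [Nat.mod_eq_sub_mod (by omega)]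
      exact ih (q - p) (by omega) (period_sub (by omega) hp hq)

lemma period_gcd {u : ℕ → β} (p q : ℕ)
    (hp : ∀ n, u (n + p) = u n) (hq : ∀ n, u (n + q) = u n) :
    ∀ n, u (n + Nat.gcd p q) = u n := by
  induction p using Nat.strong_induction_on generalizing q with
  | _ p ih =>
    rcases Nat.eq_zero_or_pos p with rfl | hppos
    · rw [Nat.gcd_zero_left]; exact hq
    · rw [Nat.gcd_rec]
      exact ih (q % p) (Nat.mod_lt _ hppos) p (period_mod p hp hq) hp

end Periods

/-- A Lyndon word has no period shorter than its length. -/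
lemma lyndon_no_short_period {w : List α} (hw : IsLyndon w) {d : ℕ} (hd : 0 < d)
    (hdlt : d < w.length)
    (hper : ∀ m (h : m + d < w.length), w[m + d] = w[m]'(by omega)) : False := by
  have hwne := hw.1
  set p := w.length with hp
  have hs : w.drop d = w.take (p - d) := by
    apply List.ext_getElem
    · simp only [List.length_drop, List.length_take, ← hp]; omega
    · intro n h1 h2
      have hn : n + d < p := by simp only [List.length_drop, ← hp] at h1; omega
      rw [List.getElem_drop, List.getElem_take]
      exact (getElem_idx_congr (Nat.add_comm d n) _).trans (hper n hn)
  have hsne : w.drop d ≠ [] := by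
    intro h
    have := congrArg List.length h
    simp [← hp] at this; omega
  have hsneq : w.drop d ≠ w := by
    intro h
    have := congrArg List.length h
    simp [← hp] at this; omega
  have h1 : List.Lex (· < ·) w (w.drop d) := hw.2 _ hsne hsneq (List.drop_suffix d w)
  have h2 : List.Lex (· < ·) (w.drop d) w := by
    rw [hs]
    exact lex_of_prefix (List.take_prefix _ _) (by rw [← hs]; exact hsneq)
  exact lex_asymm h1 h2

section ConjInj
variable [Inhabited α]

lemma rot_length {w : List α} {i : ℕ} (hi : i ≤ w.length) :
    (w.drop i ++ w.take i).length = w.length := by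
  simp only [List.length_append, List.length_drop, List.length_take]
  omega

/-- if the ω-word of a rotation of a Lyndon word has period `g < |v|`, contradiction;
hence any positive period is at least `|v|`. -/
lemma length_le_period {v : List α} (hv : IsLyndon v) {i : ℕ} (hi : i < v.length)
    {g : ℕ} (hg : 0 < g)
    (hper : ∀ n, omegaWord (v.drop i ++ v.take i) (n + g) = omegaWord (v.drop i ++ v.take i) n) :
    v.length ≤ g := by
  by_contra hlt
  push_neg at hlt
  set p := v.length with hp
  set u := omegaWord (v.drop i ++ v.take i) with hu
  have hshift : ∀ n, u n = omegaWord v (n + i) := omegaWord_rot hv.1 hi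
  have e1 : ∀ n, omegaWord v n = u (n + (p - i)) := by
    intro n
    rw [hshift, show n + (p - i) + i = n + p by omega, hp, omegaWord_period]
  have hvper : ∀ n, omegaWord v (n + g) = omegaWord v n := by
    intro n
    rw [e1, e1 n, show n + g + (p - i) = n + (p - i) + g by omega, hper]
  apply lyndon_no_short_period hv hg hlt
  intro m hm
  have h1 := hvper m
  rwa [omegaWord_of_lt (by rw [← hp]; exact hm), omegaWord_of_lt (by rw [← hp]; omega)] at h1

/-- rotations of Lyndon words with equal ω-words are equal. -/
lemma rot_eq_of_omega_eq {v w : List α} (hv : IsLyndon v) (hw : IsLyndon w)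
    {i j : ℕ} (hi : i < v.length) (hj : j < w.length)
    (h : omegaWord (v.drop i ++ v.take i) = omegaWord (w.drop j ++ w.take j)) :
    v.drop i ++ v.take i = w.drop j ++ w.take j := by
  set p := v.length with hp
  set q := w.length with hq
  have hppos : 0 < p := List.length_pos_iff.mpr hv.1
  have hqpos : 0 < q := List.length_pos_iff.mpr hw.1
  have hup : ∀ n, omegaWord (v.drop i ++ v.take i) (n + p) = omegaWord (v.drop i ++ v.take i) n := by
    intro n
    have := omegaWord_period (v.drop i ++ v.take i) n
    rwa [rot_length hi.le, ← hp] at this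
  have huq : ∀ n, omegaWord (v.drop i ++ v.take i) (n + q) = omegaWord (v.drop i ++ v.take i) n := by
    intro n
    have := omegaWord_period (w.drop j ++ w.take j) n
    rwa [rot_length hj.le, ← hq, ← h] at this
  set g := Nat.gcd p q with hgdef
  have hgpos : 0 < g := Nat.gcd_pos_of_pos_left _ hppos
  have hgper : ∀ n, omegaWord (v.drop i ++ v.take i) (n + g) = omegaWord (v.drop i ++ v.take i) n := period_gcd p q hup huq
  have hgp : g = p := le_antisymm (Nat.le_of_dvd hppos (Nat.gcd_dvd_left _ _))
    (length_le_period hv hi hgpos hgper)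
  have hgq : g = q := le_antisymm (Nat.le_of_dvd hqpos (Nat.gcd_dvd_right _ _))
    (length_le_period hw hj hgpos (fun n => by rw [← h]; exact hgper n))
  apply List.ext_getElem
  · rw [rot_length hi.le, rot_length hj.le, ← hp, ← hq, ← hgp, hgq]
  · intro n h1 h2
    have hn : n < p := by rwa [rot_length hi.le, ← hp] at h1
    have hn' : n < q := by rwa [rot_length hj.le, ← hq] at h2
    have e1 : omegaWord (v.drop i ++ v.take i) n = (v.drop i ++ v.take i)[n] :=
      omegaWord_of_lt (by rw [rot_length hi.le, ← hp]; exact hn)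
    have e2 : omegaWord (w.drop j ++ w.take j) n = (w.drop j ++ w.take j)[n] :=
      omegaWord_of_lt (by rw [rot_length hj.le, ← hq]; exact hn')
    rw [← e1, ← e2, h]

end ConjInj

section Greedy

/-- decompose a prefix of a flattened list. -/
lemma exists_decomp : ∀ (F : List (List α)), (∀ l ∈ F, l ≠ []) → ∀ k, 0 < k →
    k ≤ F.flatten.length → ∃ j, ∃ hj : j < F.length, ∃ q, q ≠ [] ∧ q <+: F[j] ∧
      F.flatten.take k = (F.take j).flatten ++ q := by
  intro F
  induction F with
  | nil => intro _ k hk hk2; simp at hk2; omega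
  | cons w F' ih =>
    intro hne k hk hk2
    by_cases h : k ≤ w.length
    · refine ⟨0, by simp, w.take k, ?_, ?_, ?_⟩
      · simp only [ne_eq, List.take_eq_nil_iff]
        push_neg
        exact ⟨by omega, hne w (List.mem_cons_self)⟩
      · simpa using List.take_prefix k w
      · simp only [List.flatten_cons, List.take_zero, List.flatten_nil, List.nil_append]
        rw [List.take_append, Nat.sub_eq_zero_of_le h, List.take_zero,
          List.append_nil]
    · push_neg at h
      have hk2' : k - w.length ≤ F'.flatten.length := by
        simp only [List.flatten_cons, List.length_append] at hk2; omega
      obtain ⟨j, hj, q, hq1, hq2, hq3⟩ := ih (fun l hl => hne l (List.mem_cons_of_mem _ hl))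
        (k - w.length) (by omega) hk2'
      refine ⟨j + 1, by simpa using hj, q, hq1, by simpa using hq2, ?_⟩
      simp only [List.flatten_cons, List.take_succ_cons, List.flatten_cons, List.append_assoc]
      rw [List.take_append, List.take_of_length_le h.le, ← hq3]

/-- a Lyndon prefix of `(w :: F).flatten` is no longer than `w`. -/
lemma lyndon_prefix_le {w : List α} {F : List (List α)} (hw : IsLyndon w)
    (hF : ∀ l ∈ F, IsLyndon l)
    (hge : ∀ l ∈ F, List.Lex (· < ·) l w ∨ l = w) {k : ℕ}
    (hk : k ≤ ((w :: F).flatten).length)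
    (hL : IsLyndon (((w :: F).flatten).take k)) : k ≤ w.length := by
  by_contra hgt
  push_neg at hgt
  have hwne : w ≠ [] := hw.1
  have hne : ∀ l ∈ (w :: F), l ≠ [] := by
    intro l hl
    rcases List.mem_cons.mp hl with rfl | hl
    · exact hwne
    · exact (hF l hl).1
  have hk0 : 0 < k := by
    have := List.length_pos_iff.mpr hwne; omega
  obtain ⟨j, hj, q, hq1, hq2, hq3⟩ := exists_decomp (w :: F) hne k hk0 hk
  set p := ((w :: F).flatten).take k with hpdef
  have hplen : p.length = k := by
    rw [hpdef, List.length_take]; omega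
  rcases Nat.eq_zero_or_pos j with rfl | hjpos
  · -- p = q, but |q| ≤ |w| < k
    simp only [List.take_zero, List.flatten_nil, List.nil_append] at hq3
    have := hq2.length_le
    simp only [List.getElem_cons_zero] at this
    rw [hq3] at hplen
    omega
  · have hA : ((w :: F).take j).flatten ≠ [] := by
      intro hnil
      rw [List.flatten_eq_nil_iff] at hnil
      apply hwne
      apply hnil
      obtain ⟨j', rfl⟩ : ∃ j', j = j' + 1 := ⟨j - 1, by omega⟩
      rw [List.take_succ_cons]
      exact List.mem_cons_self
    -- q is a proper suffix of p
    have hqsuf : q <:+ p := ⟨_, hq3.symm⟩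
    have hqnep : q ≠ p := by
      intro hqp
      have := congrArg List.length hq3
      rw [← hqp] at this
      simp only [List.length_append] at this
      have := List.length_pos_iff.mpr hA
      omega
    have h1 : List.Lex (· < ·) p q := hL.2 q hq1 hqnep hqsuf
    -- q ≤ F[j-1] ≤ w ≤ p
    have hjmem : (w :: F)[j] ∈ F := by
      rcases j with _ | j'
      · omega
      · simp only [List.getElem_cons_succ]
        exact List.getElem_mem _
    have h2 : List.Lex (· < ·) q ((w :: F)[j]) ∨ q = (w :: F)[j] := by
      rcases eq_or_ne q ((w :: F)[j]) with he | hne'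
      · exact Or.inr he
      · exact Or.inl (lex_of_prefix hq2 hne')
    have h3 : List.Lex (· < ·) ((w :: F)[j]) w ∨ (w :: F)[j] = w := hge _ hjmem
    have h4 : List.Lex (· < ·) w p ∨ w = p := by
      have hwp : w <+: p := by
        rw [hpdef]
        simp only [List.flatten_cons]
        rw [List.take_append, List.take_of_length_le (by omega)]
        exact ⟨_, rfl⟩
      rcases eq_or_ne w p with he | hne'
      · exact Or.inr he
      · exact Or.inl (lex_of_prefix hwp hne')
    have : List.Lex (· < ·) p p :=
      lex_lt_of_lt_of_le (lex_lt_of_lt_of_le (lex_lt_of_lt_of_le h1 h2) h3) h4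
    exact lex_asymm this this

lemma lynPrefixLen_flatten {w : List α} {F : List (List α)} (hw : IsLyndon w)
    (hF : ∀ l ∈ F, IsLyndon l)
    (hge : ∀ l ∈ F, List.Lex (· < ·) l w ∨ l = w) :
    lynPrefixLen ((w :: F).flatten) = w.length := by
  have hwlen : w.length ≤ ((w :: F).flatten).length := by
    simp only [List.flatten_cons, List.length_append]; omega
  have hmem : w.length ∈ {k | k ≤ ((w :: F).flatten).length ∧
      IsLyndon (((w :: F).flatten).take k)} := by
    refine ⟨hwlen, ?_⟩
    simp only [List.flatten_cons]
    rw [List.take_left]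
    exact hw
  have hub : ∀ k ∈ {k | k ≤ ((w :: F).flatten).length ∧
      IsLyndon (((w :: F).flatten).take k)}, k ≤ w.length := by
    rintro k ⟨hk1, hk2⟩
    exact lyndon_prefix_le hw hF hge hk1 hk2
  rw [lynPrefixLen]
  exact le_antisymm (csSup_le ⟨w.length, hmem⟩ hub) (le_csSup ⟨w.length, hub⟩ hmem)

/-- correctness of the greedy Lyndon factorization. -/
lemma lynGo_flatten : ∀ (n : ℕ) (F : List (List α)), (∀ l ∈ F, IsLyndon l) →
    (∀ (i j : ℕ) (hi : i < F.length) (hj : j < F.length), i < j →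
      List.Lex (· < ·) (F[j]) (F[i]) ∨ F[j] = F[i]) →
    F.flatten.length ≤ n → lynGo n F.flatten = F := by
  intro n
  induction n with
  | zero =>
    intro F hLyn _ hlen
    have : F.flatten = [] := List.length_eq_zero_iff.mp (by omega)
    rw [List.flatten_eq_nil_iff] at this
    cases F with
    | nil => rfl
    | cons w F' => exact absurd (this w (List.mem_cons_self)) (hLyn w (List.mem_cons_self)).1
  | succ n ih =>
    intro F hLyn hpw hlen
    cases F with
    | nil => simp [lynGo]
    | cons w F' =>
      have hwLyn : IsLyndon w := hLyn w (List.mem_cons_self)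
      have hwne : w ≠ [] := hwLyn.1
      have hflne : (w :: F').flatten ≠ [] := by
        simp only [List.flatten_cons]
        intro h
        exact hwne (List.append_eq_nil_iff.mp h).1
      have hge : ∀ l ∈ F', List.Lex (· < ·) l w ∨ l = w := by
        intro l hl
        obtain ⟨m, hm, rfl⟩ := List.getElem_of_mem hl
        have := hpw 0 (m + 1) (by simp) (by simp; omega) (by omega)
        simpa using this
      have hF' : ∀ l ∈ F', IsLyndon l := fun l hl => hLyn l (List.mem_cons_of_mem _ hl)
      have hlpl : lynPrefixLen ((w :: F').flatten) = w.length :=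
        lynPrefixLen_flatten hwLyn hF' hge
      have hwpos : 0 < w.length := List.length_pos_iff.mpr hwne
      rw [lynGo, if_neg hflne, hlpl, max_eq_right hwpos]
      simp only [List.flatten_cons]
      rw [List.take_left, List.drop_left]
      congr 1
      apply ih F' hF' ?_ ?_
      · intro i j hi hj hij
        have := hpw (i + 1) (j + 1) (by simp; omega) (by simp; omega) (by omega)
        simpa using this
      · simp only [List.flatten_cons, List.length_append] at hlen
        omega

end Greedy

section PermSort
variable {β : Type*}

lemma flatten_replicate_perm (k : ℕ) (l : List β) :
    (List.replicate k l).flatten.Perm (l.flatMap (fun a => List.replicate k a)) := by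
  induction l with
  | nil => simp
  | cons a l ih =>
    have h1 : ∀ m, (List.replicate m (a :: l)).flatten.Perm
        (List.replicate m a ++ (List.replicate m l).flatten) := by
      intro m
      induction m with
      | zero => simp
      | succ m ihm =>
        simp only [List.replicate_succ, List.flatten_cons, List.cons_append]
        refine List.Perm.cons a ?_
        refine (List.Perm.append_left l ihm).trans ?_
        rw [← List.append_assoc, ← List.append_assoc]
        exact (List.perm_append_comm).append_right _
    refine (h1 k).trans ?_
    rw [List.flatMap_cons]
    exact List.Perm.append_left _ ih

lemma flatten_ofFn_perm : ∀ {n : ℕ} (f g : Fin n → List β), (∀ x, (f x).Perm (g x)) →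
    (List.ofFn f).flatten.Perm (List.ofFn g).flatten := by
  intro n
  induction n with
  | zero => intro f g _; simp
  | succ n ih =>
    intro f g h
    rw [List.ofFn_succ, List.ofFn_succ, List.flatten_cons, List.flatten_cons]
    exact (h 0).append (ih _ _ (fun x => h x.succ))

lemma flatMap_flatten' (A : List (List β)) {γ : Type*} (g : β → List γ) :
    A.flatten.flatMap g = (A.map (fun l => l.flatMap g)).flatten := by
  induction A with
  | nil => simp
  | cons a A ih => simp [List.flatMap_append, ih]

lemma perm_sorted_eq {r : β → β → Prop} : ∀ {l₁ l₂ : List β}, l₁.Perm l₂ →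
    l₁.Pairwise r → l₂.Pairwise r →
    (∀ a ∈ l₁, ∀ b ∈ l₁, r a b → r b a → a = b) → l₁ = l₂ := by
  intro l₁
  induction l₁ with
  | nil => intro l₂ h _ _ _; exact (h.symm.eq_nil).symm ▸ rfl
  | cons a l ih =>
    intro l₂ h hp1 hp2 hanti
    cases l₂ with
    | nil => exact absurd h.eq_nil (by simp)
    | cons b l₂' =>
      by_cases hab : a = b
      · subst hab
        rw [ih h.cons_inv hp1.of_cons hp2.of_cons
          (fun a' ha' b' hb' => hanti a' (List.mem_cons_of_mem _ ha')
            b' (List.mem_cons_of_mem _ hb'))]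
      · exfalso
        have ha2 : a ∈ l₂' := by
          have := h.subset (List.mem_cons_self)
          simp only [List.mem_cons] at this; tauto
        have hb1 : b ∈ l := by
          have := h.symm.subset (List.mem_cons_self)
          simp only [List.mem_cons] at this; tauto
        have hrab : r a b := (List.pairwise_cons.mp hp1).1 b hb1
        have hrba : r b a := (List.pairwise_cons.mp hp2).1 a ha2
        exact hab (hanti a (List.mem_cons_self) b (List.mem_cons_of_mem _ hb1) hrab hrba)

end PermSort

section Main
variable [Inhabited α]

lemma omegaLt_trans {a b c : List α} (h1 : OmegaLt a b) (h2 : OmegaLt b c) : OmegaLt a c :=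
  infLexLt_trans h1 h2

lemma flatten_map_flatten {β : Type*} (A : List (List (List β))) :
    (A.map List.flatten).flatten = A.flatten.flatten := by
  induction A with
  | nil => simp
  | cons a A ih => simp [ih]

lemma mergeSort_key (le : List α → List α → Bool)
    (hle : ∀ a b, le a b = true ↔ ¬ OmegaLt b a)
    (t : ℕ) (Ts : Fin t → List α) (τ : Fin t → ℕ)
    (hτ : ∀ x, 1 ≤ τ x)
    (hLyn : ∀ x, IsLyndon (Ts x))
    (L : List (Fin t × List α))
    (hperm : L.Perm ((List.ofFn (fun x => (List.range (Ts x).length).map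
        (fun i => (x, (Ts x).drop i ++ (Ts x).take i)))).flatten))
    (hsorted : L.Chain' (fun a b => OmegaLt a.2 b.2)) :
    (((List.ofFn fun x => List.replicate (τ x) (Ts x)).flatten.flatMap
        (fun w => (List.range w.length).map (fun i => w.drop i ++ w.take i))).mergeSort le)
      = L.flatMap (fun p => List.replicate (τ p.1) p.2) := by
  set conjFn : List α → List (List α) :=
    fun w => (List.range w.length).map (fun i => w.drop i ++ w.take i) with hconjFn
  set F₀ : List (List α) := (List.ofFn fun x => List.replicate (τ x) (Ts x)).flatten with hF₀
  set C : List (List α) := F₀.flatMap conjFn with hC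
  set M : List (List α) := L.flatMap (fun p => List.replicate (τ p.1) p.2) with hM
  -- transitivity and totality of `le`
  have htrans : ∀ a b c : List α, le a b = true → le b c = true → le a c = true := by
    intro a b c hab hbc
    rw [hle] at hab hbc ⊢
    intro hOca
    by_cases h1 : OmegaLt c b
    · exact hbc h1
    by_cases h2 : OmegaLt b c
    · exact hab (omegaLt_trans h2 hOca)
    · have he : omegaWord b = omegaWord c := infLexLt_total h2 h1
      refine hab ?_
      unfold OmegaLt at hOca ⊢
      rw [he]
      exact hOca
  have htotal : ∀ a b : List α, (le a b || le b a) = true := by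
    intro a b
    rw [Bool.or_eq_true, hle, hle]
    rcases em (OmegaLt b a) with h | h
    · exact Or.inr (fun h' => infLexLt_irrefl _ (infLexLt_trans h h'))
    · exact Or.inl h
  -- membership in C
  have hmemC : ∀ a ∈ C, ∃ x : Fin t, ∃ i, i < (Ts x).length ∧
      a = (Ts x).drop i ++ (Ts x).take i := by
    intro a ha
    rw [hC, List.mem_flatMap] at ha
    obtain ⟨w, hw, ha⟩ := ha
    rw [hF₀, List.mem_flatten] at hw
    obtain ⟨blk, hblk, hwblk⟩ := hw
    rw [List.mem_ofFn] at hblk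
    obtain ⟨x, hx⟩ := hblk
    rw [← hx] at hwblk
    have hwx := List.eq_of_mem_replicate hwblk
    subst hwx
    rw [hconjFn, List.mem_map] at ha
    obtain ⟨i, hi, rfl⟩ := ha
    exact ⟨x, i, List.mem_range.mp hi, rfl⟩
  -- C is a permutation of M
  have hCN : C.Perm ((List.ofFn fun x => (List.range (Ts x).length).flatMap
      (fun i => List.replicate (τ x) ((Ts x).drop i ++ (Ts x).take i))).flatten) := by
    rw [hC, hF₀, flatMap_flatten', List.map_ofFn]
    apply flatten_ofFn_perm
    intro x
    simp only [Function.comp]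
    rw [List.flatMap_def, List.map_replicate, hconjFn]
    refine (flatten_replicate_perm _ _).trans ?_
    rw [List.flatMap_map]
  have hMN : M.Perm ((List.ofFn fun x => (List.range (Ts x).length).flatMap
      (fun i => List.replicate (τ x) ((Ts x).drop i ++ (Ts x).take i))).flatten) := by
    rw [hM]
    refine (hperm.flatMap_right _).trans ?_
    rw [flatMap_flatten', List.map_ofFn]
    apply List.Perm.of_eq
    apply congrArg List.flatten
    apply congrArg List.ofFn
    funext x
    simp only [Function.comp]
    rw [List.flatMap_map]
  have hCM : C.Perm M := hCN.trans hMN.symm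
  -- M is sorted
  haveI : IsTrans (Fin t × List α) (fun a b => OmegaLt a.2 b.2) :=
    ⟨fun a b c h1 h2 => omegaLt_trans h1 h2⟩
  have hpwL : L.Pairwise (fun a b => OmegaLt a.2 b.2) := List.isChain_iff_pairwise.mp hsorted
  have hMsorted : M.Pairwise (fun a b => le a b = true) := by
    rw [hM, List.flatMap_def, List.pairwise_flatten]
    constructor
    · intro l hl
      rw [List.mem_map] at hl
      obtain ⟨p, hp, rfl⟩ := hl
      rw [List.pairwise_replicate]
      exact Or.inr ((hle _ _).mpr (infLexLt_irrefl _))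
    · rw [List.pairwise_map]
      refine hpwL.imp ?_
      intro p p' hO a ha b hb
      rw [List.eq_of_mem_replicate ha, List.eq_of_mem_replicate hb, hle]
      exact fun h' => infLexLt_irrefl _ (infLexLt_trans hO h')
  -- conclude
  have hperm' : (C.mergeSort le).Perm M := (List.mergeSort_perm C le).trans hCM
  refine perm_sorted_eq hperm' (List.pairwise_mergeSort htrans htotal C) hMsorted ?_
  intro a ha b hb hab hba
  have ha' := (List.mergeSort_perm C le).subset ha
  have hb' := (List.mergeSort_perm C le).subset hb
  obtain ⟨x, i, hi, rfl⟩ := hmemC a ha'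
  obtain ⟨y, j, hj, rfl⟩ := hmemC b hb'
  rw [hle] at hab hba
  exact rot_eq_of_omega_eq (hLyn x) (hLyn y) hi hj (infLexLt_total hba hab)
end Main

/-- Let `T = T₁^{τ₁} ⋯ T_t^{τ_t}` be the composed Lyndon factorization of `T`, with
`T₁ ≻ ⋯ ≻ T_t` pairwise distinct Lyndon words and `τ_x ≥ 1`, and `R = T₁ ⋯ T_t`.
If `L` lists all conjugates of all Lyndon factors `T₁, …, T_t` (tagged with the index of
their factor), sorted strictly increasingly in `≺_ω`-order, then `BBWT(T)` is obtained by
concatenating, for each entry `(x, c)` of `L` in order, `τ_x` copies of the last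
character of `c`. -/
theorem bbwt_eq_of_sorted_conjugates [Inhabited α]
    (t : ℕ) (ht : 0 < t) (Ts : Fin t → List α) (τ : Fin t → ℕ)
    (hτ : ∀ x, 1 ≤ τ x)
    (hLyn : ∀ x, IsLyndon (Ts x))
    (hdec : ∀ x y : Fin t, x < y → List.Lex (· < ·) (Ts y) (Ts x))
    (T : List α)
    (hT : T = (List.ofFn (fun x => (List.replicate (τ x) (Ts x)).flatten)).flatten)
    (L : List (Fin t × List α))
    (hperm : L.Perm ((List.ofFn (fun x => (List.range (Ts x).length).map
        (fun i => (x, (Ts x).drop i ++ (Ts x).take i)))).flatten))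
    (hsorted : L.Chain' (fun a b => OmegaLt a.2 b.2)) :
    BBWT T = L.flatMap (fun p => List.replicate (τ p.1) (p.2.getLastD default)) := by
  classical
  have hTF : T = (List.ofFn fun x => List.replicate (τ x) (Ts x)).flatten.flatten := by
    rw [hT, ← flatten_map_flatten, List.map_ofFn]
    rfl
  have hfac : lyndonFactorization T =
      (List.ofFn fun x => List.replicate (τ x) (Ts x)).flatten := by
    have hLyn' : ∀ l ∈ (List.ofFn fun x => List.replicate (τ x) (Ts x)).flatten,
        IsLyndon l := by
      intro l hl
      rw [List.mem_flatten] at hl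
      obtain ⟨blk, hblk, hlblk⟩ := hl
      rw [List.mem_ofFn] at hblk
      obtain ⟨x, hx⟩ := hblk
      rw [← hx] at hlblk
      rw [List.eq_of_mem_replicate hlblk]
      exact hLyn x
    have hpw : (List.ofFn fun x => List.replicate (τ x) (Ts x)).flatten.Pairwise
        (fun a b => List.Lex (· < ·) b a ∨ b = a) := by
      rw [List.pairwise_flatten]
      constructor
      · intro l hl
        rw [List.mem_ofFn] at hl
        obtain ⟨x, hx⟩ := hl
        rw [← hx, List.pairwise_replicate]
        exact Or.inr (Or.inr rfl)
      · rw [List.pairwise_ofFn]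
        intro i j hij a ha b hb
        rw [List.eq_of_mem_replicate ha, List.eq_of_mem_replicate hb]
        exact Or.inl (hdec i j hij)
    rw [lyndonFactorization, hTF]
    exact lynGo_flatten _ _ hLyn' (List.pairwise_iff_getElem.mp hpw) le_rfl
  rw [BBWT, hfac]
  rw [mergeSort_key _ (fun a b => decide_eq_true_iff) t Ts τ hτ hLyn L hperm hsorted]
  rw [List.map_flatMap]
  simp [List.map_replicate]
end

section
/- Let R be a nonempty string with Lyndon factorization R = T_1 T_2 ··· T_t, and let p be the starting position of a factor T_x with |T_x| ≥ 2. Then the suffix R[p..|R|] is lexicographically strictly smaller than the suffix R[p+1..|R|] (i.e., position p has type S). -/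
open List

variable {α : Type*} [LinearOrder α]

lemma lex_append_right_of_length_lt {u v : List α}
    (h : List.Lex (· < ·) u v) (hlen : v.length < u.length) (r : List α) :
    List.Lex (· < ·) (u ++ r) (v ++ r) := by
  induction h with
  | nil => simp at hlen
  | @cons a l₁ l₂ h ih =>
      exact List.Lex.cons (ih (by simpa using Nat.lt_of_succ_lt_succ hlen))
  | rel h => exact List.Lex.rel h

lemma flatten_drop_sum_take (Ts : List (List α)) :
    ∀ x, x ≤ Ts.length →
      Ts.flatten.drop (((Ts.take x).map List.length).sum) = (Ts.drop x).flatten := by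
  induction Ts with
  | nil => intro x _; simp
  | cons w Ts ih =>
      intro x hx
      cases x with
      | zero => simp
      | succ n =>
          simp only [List.take_succ_cons, List.map_cons, List.sum_cons,
            List.drop_succ_cons, List.flatten_cons]
          rw [← List.drop_drop, List.drop_append_of_le_length le_rfl,
            List.drop_length, List.nil_append]
          exact ih n (Nat.le_of_succ_le_succ hx)

/-- Let `R = T₁T₂⋯T_t` be the Lyndon factorization of a nonempty string `R`
(each `T_x` a Lyndon word, consecutive factors non-increasing).  If `T_x` is a factor
with `|T_x| ≥ 2` and `p` is its (0-based) starting position in `R`, then the suffix of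
`R` starting at `p` is lexicographically strictly smaller than the suffix starting at
`p + 1`; i.e. position `p` has type `S`. -/
theorem factor_start_is_S_type
    (Ts : List (List α)) (hne : Ts ≠ [])
    (hLyn : ∀ w ∈ Ts, IsLyndon w)
    (hchain : Ts.Chain' (fun a b => ¬ List.Lex (· < ·) a b))
    (x : ℕ) (hx : x < Ts.length) (hlen : 2 ≤ (Ts[x]'hx).length)
    (p : ℕ) (hp : p = ((Ts.take x).map List.length).sum) :
    List.Lex (· < ·) (Ts.flatten.drop p) (Ts.flatten.drop (p + 1)) := by
  set w := Ts[x]'hx with hw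
  have hdropx : Ts.drop x = w :: Ts.drop (x + 1) := List.drop_eq_getElem_cons hx
  have h1 : Ts.flatten.drop p = w ++ (Ts.drop (x + 1)).flatten := by
    rw [hp, flatten_drop_sum_take Ts x (le_of_lt hx), hdropx, List.flatten_cons]
  have hwlen : 1 ≤ w.length := le_trans (by norm_num) hlen
  have h2 : Ts.flatten.drop (p + 1) = w.tail ++ (Ts.drop (x + 1)).flatten := by
    rw [← List.drop_drop, h1, List.drop_append_of_le_length hwlen,
      List.drop_one]
  rw [h1, h2]
  have hmem : w ∈ Ts := List.getElem_mem hx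
  obtain ⟨hwne, hLyn'⟩ := hLyn w hmem
  have htail_ne : w.tail ≠ [] := by
    intro h
    have := (List.length_tail : w.tail.length = w.length - 1)
    rw [h] at this
    simp at this
    omega
  have htail_len : w.tail.length < w.length := by
    rw [List.length_tail]; omega
  have htail_suf : w.tail <:+ w := List.tail_suffix w
  have hlex : List.Lex (· < ·) w w.tail :=
    hLyn' w.tail htail_ne (by intro h; rw [h] at htail_len; omega) htail_suf
  exact lex_append_right_of_length_lt hlex htail_len _
end

section
/- Let R be a nonempty string with Lyndon factorization R = T_1 T_2 ··· T_t, and for x < t let q be the position of the last character of T_x. Then the suffix R[q..|R|] is lexicographically strictly greater than the suffix R[q+1..|R|] (i.e., the last position of every non-final Lyndon factor has type L). -/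
open List

variable {α : Type*} [LinearOrder α]

lemma key_lemma (c : α) : ∀ (Us : List (List α)),
    (∀ u ∈ Us, u ≠ [] ∧ ¬ List.Lex (· < ·) [c] u) →
    ¬ List.Lex (· < ·) (c :: Us.flatten) Us.flatten := by
  intro Us
  induction Us with
  | nil => intro _ h; exact (by cases h)
  | cons u Us ih =>
    intro h hlex
    obtain ⟨hne, hle⟩ := h u (mem_cons_self (a := u) (l := Us))
    obtain ⟨u0, u', rfl⟩ := List.exists_cons_of_ne_nil hne
    simp only [flatten_cons, cons_append] at hlex
    cases hlex with
    | rel h1 => exact hle (List.Lex.rel h1)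
    | cons h1 =>
      cases u' with
      | nil => exact ih (fun v hv => h v (mem_cons_of_mem _ hv)) h1
      | cons v u'' => exact hle (List.Lex.cons (List.Lex.nil))

/-- Let `R = T₁T₂⋯T_t` be the Lyndon factorization of a nonempty string `R`
(each `T_x` a Lyndon word, consecutive factors non-increasing).  If `x < t` and `q` is
the (0-based) position of the last character of the non-final factor `T_x` in `R`
(so `q + 1 = |T₁| + ⋯ + |T_x|`), then the suffix of `R` starting at `q` is
lexicographically strictly greater than the suffix starting at `q + 1`; i.e. position `q`
has type `L`. -/
theorem factor_end_is_L_type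
    (Ts : List (List α))
    (hLyn : ∀ w ∈ Ts, IsLyndon w)
    (hchain : Ts.Chain' (fun a b => ¬ List.Lex (· < ·) a b))
    (x : ℕ) (hx : x + 1 < Ts.length)
    (q : ℕ) (hq : q + 1 = ((Ts.take (x + 1)).map List.length).sum) :
    List.Lex (· < ·) (Ts.flatten.drop (q + 1)) (Ts.flatten.drop q) := by
  have hxlt : x < Ts.length := by omega
  set P : List α := (Ts.take (x + 1)).flatten with hP
  set S : List α := (Ts.drop (x + 1)).flatten with hS
  have hflat : Ts.flatten = P ++ S := by
    rw [hP, hS, ← flatten_append, take_append_drop]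
  have hPlen : P.length = q + 1 := by
    rw [hP, length_flatten, hq]
  -- the last factor T and its last character c
  set T : List α := Ts[x] with hT
  have hTmem : T ∈ Ts := getElem_mem hxlt
  obtain ⟨hTne, hTlyn⟩ := hLyn T hTmem
  have hPne : P ≠ [] := by
    intro h; rw [h] at hPlen; simp at hPlen
  set c : α := P.getLast hPne with hc
  -- c is the last character of T
  have hPT : P = (Ts.take x).flatten ++ T := by
    rw [hP, ← take_concat_get hxlt, concat_eq_append, flatten_append]
    simp [hT]
  have hcT : c = T.getLast hTne := by
    rw [hc]
    simp only [hPT]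
    exact getLast_append_right hTne
  -- drop computations
  have hdrop1 : Ts.flatten.drop (q + 1) = S := by
    rw [hflat, ← hPlen, drop_left]
  have hdrop0 : Ts.flatten.drop q = c :: S := by
    rw [hflat, drop_append]
    have h1 : q - P.length = 0 := by omega
    have h2 : q < P.length := by omega
    rw [h1, drop_zero, drop_eq_getElem_cons h2,
      show P.drop (q + 1) = [] from drop_eq_nil_of_le hPlen.le]
    rw [hc, getLast_eq_getElem]
    have h3 : P.length - 1 = q := by omega
    simp [h3]
  rw [hdrop1, hdrop0]
  -- T ≤ [c]
  have hcTle : ¬ List.Lex (· < ·) [c] T := by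
    by_cases hEq : [c] = T
    · rw [hEq]; exact lt_irrefl T
    · have : List.Lex (· < ·) T [c] := by
        apply hTlyn [c] (by simp) hEq
        rw [hcT]
        exact ⟨T.dropLast, dropLast_append_getLast hTne⟩
      exact fun h => lt_asymm (α := List α) this h
  -- all later factors are ≤ [c]
  haveI : IsTrans (List α) (fun a b => ¬ List.Lex (· < ·) a b) := by
    constructor
    intro a b d hab hbd h
    have h' : a < d := h
    exact absurd ((h'.trans_le (not_lt.mp hbd)).trans_le (not_lt.mp hab)) (lt_irrefl _)
  have hpair : Ts.Pairwise (fun a b => ¬ List.Lex (· < ·) a b) :=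
    isChain_iff_pairwise.mp hchain
  rw [pairwise_iff_getElem] at hpair
  have hall : ∀ u ∈ Ts.drop (x + 1), u ≠ [] ∧ ¬ List.Lex (· < ·) [c] u := by
    intro u hu
    refine ⟨(hLyn u (mem_of_mem_drop hu)).1, ?_⟩
    rw [mem_iff_getElem] at hu
    obtain ⟨i, hi, rfl⟩ := hu
    have hi' : x + 1 + i < Ts.length := by
      simp only [length_drop] at hi; omega
    have heq : (Ts.drop (x + 1))[i] = Ts[x + 1 + i]'hi' := by rw [getElem_drop]
    rw [heq]
    have hTu : ¬ List.Lex (· < ·) T Ts[x + 1 + i] :=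
      hpair x (x + 1 + i) hxlt hi' (by omega)
    intro h
    have h1 : [c] < Ts[x + 1 + i] := h
    have h2 : Ts[x + 1 + i] ≤ T := not_lt.mp hTu
    have h3 : T ≤ [c] := not_lt.mp hcTle
    exact absurd ((h1.trans_le h2).trans_le h3) (lt_irrefl _)
  have hkey := key_lemma c (Ts.drop (x + 1)) hall
  rw [← hS] at hkey
  rcases lt_trichotomy (α := List α) S (c :: S) with h | h | h
  · exact h
  · exfalso; apply congrArg List.length at h; simp at h
  · exact absurd h hkey
end

section
/- Let T be a nonempty string with Lyndon factorization T = T_1 T_2 ··· T_t, and for each x let p_x be the starting position of T_x in T. Then the suffixes of T starting at the beginnings of the Lyndon factors are strictly lexicographically decreasing: T[p_x..|T|] ≻_lex T[p_{x+1}..|T|] for every x with 1 ≤ x < t. -/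
open List

variable {α : Type*} [LinearOrder α]

/-- If `l₁` is a prefix of `l₂` then `l₂` is not lexicographically smaller than `l₁`. -/
theorem lex_aux_not_lex_of_prefix : ∀ {l₁ l₂ : List α}, l₁ <+: l₂ →
    ¬ List.Lex (· < ·) l₂ l₁ := by
  intro l₁ l₂ h hlex
  induction hlex with
  | nil => obtain ⟨t, ht⟩ := h; simp at ht
  | @rel a l₁ b l₂ hab =>
      obtain ⟨t, ht⟩ := h
      simp only [cons_append, cons.injEq] at ht
      exact absurd ht.1 (ne_of_gt hab)
  | @cons a l₁ l₂ _ ih =>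
      exact ih ((prefix_cons_inj a).mp h)

/-- Cancel a common left factor in a lexicographic comparison. -/
theorem lex_aux_append_cancel : ∀ (u : List α) {A B : List α},
    List.Lex (· < ·) (u ++ A) (u ++ B) → List.Lex (· < ·) A B := by
  intro u
  induction u with
  | nil => intro A B h; exact h
  | cons a u ih =>
      intro A B h
      cases h with
      | rel h => exact absurd h (lt_irrefl a)
      | cons h => exact ih h

theorem lex_aux_of_append_left : ∀ {u v : List α} {X : List α},
    List.Lex (· < ·) (u ++ X) v → List.Lex (· < ·) u v ∨ u <+: v := by
  intro u
  induction u with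
  | nil => intro v X h; exact Or.inr nil_prefix
  | cons a u ih =>
      intro v X h
      cases h with
      | rel h => exact Or.inl (List.Lex.rel h)
      | @cons _ _ _ h =>
          rcases ih h with h' | h'
          · exact Or.inl (List.Lex.cons h')
          · exact Or.inr ((prefix_cons_inj a).mpr h')

theorem lex_aux_of_not_prefix : ∀ {u v : List α}, List.Lex (· < ·) u v → ¬ u <+: v →
    ∀ X Y : List α, List.Lex (· < ·) (u ++ X) (v ++ Y) := by
  intro u v h
  induction h with
  | nil => intro hp; exact absurd nil_prefix hp
  | rel h => intro _ X Y; exact List.Lex.rel h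
  | @cons a l₁ l₂ h ih =>
      intro hp X Y
      exact List.Lex.cons (ih (fun hpp => hp ((prefix_cons_inj a).mpr hpp)) X Y)

theorem lex_trans'_s4 {a b c : List α} (h1 : List.Lex (· < ·) a b)
    (h2 : List.Lex (· < ·) b c) : List.Lex (· < ·) a c :=
  List.lex_trans lt_trans h1 h2

/-- Main combinatorial lemma: if `u ++ v ≺ v` and `S ≺ u ++ S` then
`u ++ S ≺ v ++ Y` for every `Y`. -/
theorem lex_aux_B (n : ℕ) : ∀ (v : List α), v.length ≤ n → ∀ (u S Y : List α), u ≠ [] →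
    List.Lex (· < ·) (u ++ v) v → List.Lex (· < ·) S (u ++ S) →
    List.Lex (· < ·) (u ++ S) (v ++ Y) := by
  induction n with
  | zero =>
      intro v hv u S Y hu h hS
      have hv0 : v = [] := List.eq_nil_of_length_eq_zero (Nat.le_zero.mp hv)
      rw [hv0, List.append_nil] at h
      rw [hv0]
      cases h
  | succ n ih =>
      intro v hv u S Y hu h hS
      by_cases hp : u <+: v
      · obtain ⟨v', rfl⟩ := hp
        by_cases hv' : v' = []
        · rw [hv', append_nil] at h
          exact absurd h (lex_aux_not_lex_of_prefix (prefix_append u u))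
        · have h' : List.Lex (· < ·) (u ++ v') v' :=
            lex_aux_append_cancel u (by simpa [List.append_assoc] using h)
          have hupos : 0 < u.length := List.length_pos_iff.mpr hu
          have hlen : v'.length ≤ n := by
            have := hv
            rw [length_append] at this
            omega
          have hrec : List.Lex (· < ·) (u ++ S) (v' ++ Y) := ih v' hlen u S Y hu h' hS
          have hSY : List.Lex (· < ·) S (v' ++ Y) := lex_trans'_s4 hS hrec
          rw [append_assoc]
          exact List.Lex.append_left _ hSY u
      · rcases lex_aux_of_append_left h with h' | h'
        · exact lex_aux_of_not_prefix h' hp S Y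
        · exact absurd h' hp

/-- Key step: if `w` is Lyndon, `u` nonempty, `w ⊀ u`, and `S ≺ u ++ S`, then
`u ++ S ≺ w ++ (u ++ S)`. -/
theorem lex_key (w u S : List α) (hw : IsLyndon w) (hu : u ≠ [])
    (hle : ¬ List.Lex (· < ·) w u) (hS : List.Lex (· < ·) S (u ++ S)) :
    List.Lex (· < ·) (u ++ S) (w ++ (u ++ S)) := by
  have htri : List.Lex (· < ·) u w ∨ u = w ∨ List.Lex (· < ·) w u :=
    trichotomous_of (List.Lex (· < ·)) u w
  rcases htri with h | rfl | h
  · by_cases hp : u <+: w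
    · obtain ⟨v, rfl⟩ := hp
      have hvne : v ≠ [] := by
        rintro rfl
        rw [append_nil] at h
        exact absurd h (lex_aux_not_lex_of_prefix (List.prefix_refl u))
      have hvw : v ≠ u ++ v := by
        intro heq
        have := congrArg List.length heq
        rw [length_append] at this
        have hul : u.length = 0 := by omega
        exact hu (List.eq_nil_of_length_eq_zero hul)
      have hlyn : List.Lex (· < ·) (u ++ v) v := hw.2 v hvne hvw ⟨u, rfl⟩
      have hB : List.Lex (· < ·) (u ++ S) (v ++ (u ++ S)) :=
        lex_aux_B v.length v le_rfl u S (u ++ S) hu hlyn hS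
      have hSv : List.Lex (· < ·) S (v ++ (u ++ S)) := lex_trans'_s4 hS hB
      rw [append_assoc]
      exact List.Lex.append_left _ hSv u
    · exact lex_aux_of_not_prefix h hp S (u ++ S)
  · exact List.Lex.append_left _ hS u
  · exact absurd h hle

/-- For a chain of Lyndon words headed by `w`, the flattening of the tail is
lexicographically smaller than `w` prepended to it. -/
theorem lex_main : ∀ (L : List (List α)) (w : List α), IsLyndon w →
    (∀ u ∈ L, IsLyndon u) →
    List.Chain' (fun a b => ¬ List.Lex (· < ·) a b) (w :: L) →
    List.Lex (· < ·) L.flatten (w ++ L.flatten) := by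
  intro L
  induction L with
  | nil =>
      intro w hw _ _
      simp only [flatten_nil, append_nil]
      cases w with
      | nil => exact absurd rfl hw.1
      | cons a l => exact List.Lex.nil
  | cons u r ih =>
      intro w hw hall hchain
      simp only [List.Chain', List.isChain_cons_cons] at hchain
      have hS : List.Lex (· < ·) r.flatten (u ++ r.flatten) :=
        ih u (hall u (mem_cons_self (a := u) (l := r))) (fun t ht => hall t (mem_cons_of_mem u ht))
          hchain.2
      rw [flatten_cons]
      exact lex_key w u r.flatten hw (hall u (mem_cons_self (a := u) (l := r))).1 hchain.1 hS

omit [LinearOrder α] in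
theorem drop_sum_take_flatten (Ts : List (List α)) (n : ℕ) :
    Ts.flatten.drop (((Ts.take n).map List.length).sum) = (Ts.drop n).flatten := by
  induction Ts generalizing n with
  | nil => simp
  | cons hd tl ih =>
      cases n with
      | zero => simp
      | succ m => simpa [List.drop_append, List.map_take, List.drop_eq_nil_of_le] using ih m

/-- Let `T = T₁T₂⋯T_t` be the Lyndon factorization of a nonempty string `T`
(each `T_x` a Lyndon word, consecutive factors non-increasing).  Then the suffixes of
`T` starting at the beginnings of the Lyndon factors are strictly lexicographically
decreasing: for `x + 1 < t` (0-based), the suffix starting at the beginning of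
`T_{x+1}` is strictly smaller than the suffix starting at the beginning of `T_x`. -/
theorem suffixes_at_factor_starts_strictly_decreasing
    (Ts : List (List α))
    (hLyn : ∀ w ∈ Ts, IsLyndon w)
    (hchain : Ts.Chain' (fun a b => ¬ List.Lex (· < ·) a b))
    (x : ℕ) (hx : x + 1 < Ts.length) :
    List.Lex (· < ·)
      (Ts.flatten.drop (((Ts.take (x + 1)).map List.length).sum))
      (Ts.flatten.drop (((Ts.take x).map List.length).sum)) := by
  rw [drop_sum_take_flatten, drop_sum_take_flatten]
  have hcons : Ts.drop x = Ts[x] :: Ts.drop (x + 1) :=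
    List.drop_eq_getElem_cons (by omega)
  rw [hcons, flatten_cons]
  have hchain' : List.Chain' (fun a b => ¬ List.Lex (· < ·) a b)
      (Ts[x] :: Ts.drop (x + 1)) := by
    rw [← hcons]; exact hchain.drop x
  exact lex_main (Ts.drop (x + 1)) Ts[x]
    (hLyn _ (List.getElem_mem _))
    (fun u hu => hLyn u (List.mem_of_mem_drop hu))
    hchain'
end

section
/- If w is a Lyndon word and u is a nonempty proper suffix of w, then for all (possibly empty) strings z and z', w·z ≺_lex u·z'. In particular, every suffix of a string R starting strictly inside a Lyndon factor of its Lyndon factorization is lexicographically greater than the suffix of R starting at the beginning of that factor. -/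
open List

variable {α : Type*} [LinearOrder α]

lemma lex_append_aux {α : Type*} [LinearOrder α] :
    ∀ w u : List α, List.Lex (· < ·) w u → ¬ w <+: u →
    ∀ z z' : List α, List.Lex (· < ·) (w ++ z) (u ++ z')
  | _, _, List.Lex.nil, hp => absurd (List.nil_prefix) hp
  | _, _, @List.Lex.cons _ _ a w u h, hp => fun z z' =>
      List.Lex.cons (lex_append_aux w u h
        (fun hpp => hp (List.cons_prefix_cons.2 ⟨rfl, hpp⟩)) z z')
  | _, _, List.Lex.rel h, _ => fun _ _ => List.Lex.rel h

/-- If `w` is a Lyndon word and `u` a nonempty proper suffix of `w`, then `w·z ≺ u·z'`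
for all strings `z, z'`.  In particular, in a Lyndon factorization `R = T₁⋯T_t`
(each factor Lyndon, consecutive factors non-increasing), every suffix of `R` starting
strictly inside a factor `T_x` is lexicographically greater than the suffix of `R`
starting at the beginning of `T_x`. -/
theorem lyndon_appended_lt_suffix_appended {α : Type*} [LinearOrder α] :
    (∀ w u : List α, IsLyndon w → u ≠ [] → u ≠ w → u <:+ w →
      ∀ z z' : List α, List.Lex (· < ·) (w ++ z) (u ++ z'))
    ∧ (∀ Ts : List (List α), (∀ w ∈ Ts, IsLyndon w) →
        Ts.Chain' (fun a b => ¬ List.Lex (· < ·) a b) →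
        ∀ x, x < Ts.length → ∀ i : ℕ,
          ((Ts.take x).map List.length).sum < i →
          i < ((Ts.take (x + 1)).map List.length).sum →
          List.Lex (· < ·)
            (Ts.flatten.drop (((Ts.take x).map List.length).sum))
            (Ts.flatten.drop i)) := by
  have main : ∀ w u : List α, IsLyndon w → u ≠ [] → u ≠ w → u <:+ w →
      ∀ z z' : List α, List.Lex (· < ·) (w ++ z) (u ++ z') := by
    intro w u hw hu hne hsuf z z'
    have hlex := hw.2 u hu hne hsuf
    refine lex_append_aux w u hlex ?_ z z'
    intro hp
    exact hne ((hp.eq_of_length (le_antisymm hp.length_le hsuf.length_le)).symm)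
  refine ⟨main, ?_⟩
  intro Ts hL _ x hx i hlo hhi
  set s := ((Ts.take x).map List.length).sum with hs
  have hdecomp : Ts.drop x = Ts[x] :: Ts.drop (x + 1) := List.drop_eq_getElem_cons hx
  set T := Ts[x] with hT
  have hflatlen : ((Ts.take x).flatten).length = s := by
    simp [hs, List.length_flatten]
  have h1 : Ts.flatten.drop s = T ++ (Ts.drop (x + 1)).flatten := by
    conv_lhs => rw [← List.take_append_drop x Ts]
    rw [List.flatten_append, ← hflatlen, List.drop_left, hdecomp, List.flatten_cons]
  have hsum2 : ((Ts.take (x + 1)).map List.length).sum = s + T.length := by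
    rw [List.take_succ]
    simp [hs, hx]
    rfl
  set j := i - s with hj
  have hjpos : 0 < j := by omega
  have hjlt : j < T.length := by omega
  have h2 : Ts.flatten.drop i = T.drop j ++ (Ts.drop (x + 1)).flatten := by
    have : Ts.flatten.drop i = (Ts.flatten.drop s).drop j := by
      rw [List.drop_drop]; congr 1; omega
    rw [this, h1, List.drop_append_of_le_length (le_of_lt hjlt)]
  rw [h1, h2]
  apply main
  · exact hL T (List.getElem_mem hx)
  · simp only [ne_eq, List.drop_eq_nil_iff]; omega
  · intro h
    have := congrArg List.length h
    simp at this; omega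
  · exact List.drop_suffix j T
end

section
/- For Lyndon words u and v with u ≠ v, u ≺_lex v if and only if u^ω ≺_lex v^ω (the ω-order and the lexicographic order coincide on Lyndon words); in particular, distinct Lyndon words u ≠ v satisfy u^ω ≠ v^ω. -/
open List

variable {α : Type*} [LinearOrder α]

/-- Characterization of `List.Lex`. -/
lemma lex_char [Inhabited α] {u v : List α} (h : List.Lex (· < ·) u v) :
    (∃ s : List α, s ≠ [] ∧ v = u ++ s) ∨
    (∃ ℓ, ℓ < u.length ∧ ℓ < v.length ∧ (∀ i < ℓ, u.getD i default = v.getD i default) ∧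
      u.getD ℓ default < v.getD ℓ default) := by
  induction h with
  | nil => exact Or.inl ⟨_, by simp_all, rfl⟩
  | @rel a l₁ b l₂ hab =>
      exact Or.inr ⟨0, by simp, by simp, by omega, by simpa using hab⟩
  | @cons a l₁ l₂ h ih =>
      rcases ih with ⟨s, hs, rfl⟩ | ⟨ℓ, h1, h2, h3, h4⟩
      · exact Or.inl ⟨s, hs, rfl⟩
      · refine Or.inr ⟨ℓ + 1, by simpa using h1, by simpa using h2, ?_, by simpa using h4⟩
        intro i hi
        match i with
        | 0 => rfl
        | (j+1) => simpa using h3 j (by omega)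

lemma omega_period [Inhabited α] (S : List α) (n : ℕ) :
    omegaWord S (n + S.length) = omegaWord S n := by
  unfold omegaWord
  rw [Nat.add_mod_right]

lemma omega_lt [Inhabited α] {S : List α} {n : ℕ} (h : n < S.length) :
    omegaWord S n = S.getD n default := by
  unfold omegaWord
  rw [Nat.mod_eq_of_lt h]

/-- Main lemma: if `v` is Lyndon and `u ≺ v` then `u^ω ≺ v^ω`. -/
lemma main_lemma [Inhabited α] {u v : List α} (hu : u ≠ []) (hv : IsLyndon v)
    (h : List.Lex (· < ·) u v) : InfLexLt (omegaWord u) (omegaWord v) := by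
  rcases lex_char h with ⟨s, hs, rfl⟩ | ⟨ℓ, h1, h2, h3, h4⟩
  · -- u is a proper prefix of v = u ++ s
    have hul : 0 < u.length := List.length_pos_iff.mpr hu
    have hsl : 0 < s.length := List.length_pos_iff.mpr hs
    have hsv : s ≠ u ++ s := by
      intro heq
      have := congrArg List.length heq
      simp only [List.length_append] at this
      omega
    have hlex : List.Lex (· < ·) (u ++ s) s := hv.2 s hs hsv ⟨u, rfl⟩
    rcases lex_char hlex with ⟨t, ht, hteq⟩ | ⟨ℓ, h1, h2, h3, h4⟩
    · -- impossible by length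
      exfalso
      have := congrArg List.length hteq
      simp at this
      omega
    · -- first difference of (u++s) and s at ℓ < s.length
      simp only [List.length_append] at h1
      -- value facts
      have hvlen : ℓ < (u ++ s).length := by simp; omega
      have hval : ∀ i < s.length, omegaWord (u ++ s) (u.length + i) = s.getD i default := by
        intro i hi
        rw [omega_lt (by simp; omega), List.getD_append_right u s default _ (by omega)]
        congr 1
        omega
      have key : ∀ m, m < u.length + ℓ → omegaWord u m = omegaWord (u ++ s) m := by
        intro m
        induction m using Nat.strong_induction_on with
        | _ m ih =>
          intro hm
          by_cases hcase : m < u.length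
          · rw [omega_lt hcase, omega_lt (by simp; omega),
              List.getD_append u s default m hcase]
          · push_neg at hcase
            have hi : m - u.length < ℓ := by omega
            have e1 : omegaWord u m = omegaWord u (m - u.length) := by
              conv_lhs => rw [show m = (m - u.length) + u.length from by omega]
              rw [omega_period]
            have e2 : omegaWord (u ++ s) m = omegaWord (u ++ s) (m - u.length) := by
              conv_lhs => rw [show m = u.length + (m - u.length) from by omega]
              rw [hval _ (by omega), ← h3 _ hi,
                omega_lt (show m - u.length < (u++s).length by simp; omega)]
            rw [e1, e2]
            exact ih _ (by omega) (by omega)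
      refine ⟨u.length + ℓ, key, ?_⟩
      have e1 : omegaWord u (u.length + ℓ) = omegaWord u ℓ := by
        rw [Nat.add_comm, omega_period]
      rw [e1, key ℓ (by omega), omega_lt hvlen, hval ℓ h2]
      exact h4
  · -- first difference within both words
    refine ⟨ℓ, ?_, ?_⟩
    · intro m hm
      rw [omega_lt (by omega), omega_lt (by omega)]
      exact h3 m hm
    · rw [omega_lt h1, omega_lt h2]
      exact h4

lemma inf_asymm {f g : ℕ → α} (h : InfLexLt f g) : ¬ InfLexLt g f := by
  rintro ⟨m, hm, hm2⟩
  obtain ⟨n, hn, hn2⟩ := h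
  rcases lt_trichotomy n m with hc | rfl | hc
  · exact absurd (hm n hc) (ne_of_gt hn2)
  · exact absurd hn2 (not_lt_of_gt hm2)
  · exact absurd (hn m hc) (ne_of_gt hm2)

lemma inf_ne {f g : ℕ → α} (h : InfLexLt f g) : f ≠ g := by
  obtain ⟨n, _, hn2⟩ := h
  intro he
  rw [he] at hn2
  exact lt_irrefl _ hn2

/-- For distinct Lyndon words `u ≠ v`, the lexicographic order and the ω-order coincide:
`u ≺_lex v` iff `u^ω ≺_lex v^ω`; in particular `u^ω ≠ v^ω`. -/
theorem lyndon_lex_iff_omega [Inhabited α]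
    (u v : List α) (hu : IsLyndon u) (hv : IsLyndon v) (huv : u ≠ v) :
    (List.Lex (· < ·) u v ↔ InfLexLt (omegaWord u) (omegaWord v))
    ∧ omegaWord u ≠ omegaWord v := by
  have tri : List.Lex (· < ·) u v ∨ List.Lex (· < ·) v u := by
    rcases lt_trichotomy u v with h | h | h
    · exact Or.inl h
    · exact absurd h huv
    · exact Or.inr h
  constructor
  · constructor
    · intro h; exact main_lemma hu.1 hv h
    · intro h
      by_contra hc
      have : List.Lex (· < ·) v u := tri.resolve_left hc
      exact inf_asymm (main_lemma hv.1 hu this) h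
  · rcases tri with h | h
    · exact inf_ne (main_lemma hu.1 hv h)
    · exact (inf_ne (main_lemma hv.1 hu h)).symm
end

section
/- Let R be a nonempty string with Lyndon factorization R = T_1 T_2 ··· T_t where T_1 ≻_lex ··· ≻_lex T_t are pairwise distinct, let T_x be a factor with |T_x| ≥ 2, and let p and q be the first and last positions of T_x in R. For every position i with p ≤ i < q, writing c_i for the conjugate of T_x whose first character is at position i of R, it holds that R[i..|R|] ≺_lex R[i+1..|R|] if and only if (c_i)^ω ≺_lex (c_{i+1})^ω. That is, the L/S type of every non-final position inside a Lyndon factor is the same whether computed from the suffixes of R or from the infinite powers of the corresponding conjugates. -/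
open List

variable {α : Type*} [LinearOrder α]

/-! ### Auxiliary machinery -/

private def consInf (a : α) (W : ℕ → α) : ℕ → α :=
  fun n => match n with
  | 0 => a
  | m + 1 => W m

private def appendInf [Inhabited α] (l : List α) (W : ℕ → α) : ℕ → α :=
  fun n => if n < l.length then l.getD n default else W (n - l.length)

/-- The condition that the first letter of `l` deviating from `a` (if any) is `< a`. -/
private def Qa [Inhabited α] (a : α) (l : List α) : Prop :=
  ∀ k, (∀ r < k, l.getD r default = a) → k < l.length → l.getD k default ≤ a

private lemma getDd [Inhabited α] {l : List α} {n : ℕ} (h : n < l.length) :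
    l.getD n default = l[n] := by
  simp [List.getD_eq_getElem?_getD, List.getElem?_eq_getElem h]

private lemma getD_append_left [Inhabited α] {l l' : List α} {n : ℕ} (h : n < l.length) :
    (l ++ l').getD n default = l.getD n default := by
  rw [getDd (by simp; omega), getDd h, List.getElem_append_left h]

private lemma notLex_cons [Inhabited α] (a : α) :
    ∀ Z : List α, Qa a Z → ¬ List.Lex (· < ·) (a :: Z) Z := by
  intro Z
  induction Z with
  | nil => intro _ h; cases h
  | cons b Z' ih =>
    intro hQ h
    have hb : b ≤ a := by
      have := hQ 0 (by omega) (by simp)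
      simpa using this
    cases h with
    | rel h => exact absurd h (not_lt.2 hb)
    | cons h =>
      -- here a = b and h : Lex (b :: Z') Z', i.e. Lex (a :: Z') Z'
      apply ih _ h
      intro k hk hklen
      have := hQ (k + 1) ?_ (by simpa using Nat.succ_lt_succ hklen)
      · simpa using this
      · intro r hr
        cases r with
        | zero =>
          have := hQ 0 (by omega) (by simp)
          simpa using this
        | succ s => simpa using hk s (by omega)

private lemma notInfLex (a : α) (V : ℕ → α)
    (hQ : ∀ k, (∀ r < k, V r = a) → V k ≤ a) : ¬ InfLexLt (consInf a V) V := by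
  rintro ⟨n, hagree, hlt⟩
  have hVa : ∀ r < n, V r = a := by
    intro r hr
    induction r using Nat.strong_induction_on with
    | _ r ih =>
      have h1 : consInf a V r = V r := hagree r hr
      cases r with
      | zero => exact h1.symm
      | succ m =>
        have : V m = a := ih m (by omega) (by omega)
        simpa [consInf, this] using h1.symm
  have h2 : consInf a V n = a := by
    cases n with
    | zero => rfl
    | succ m => simpa [consInf] using hVa m (by omega)
  have h3 : V n ≤ a := hQ n hVa
  rw [h2] at hlt
  exact absurd hlt (not_lt.2 h3)

private lemma lex_iff_of_firstdiff [Inhabited α] :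
    ∀ (k : ℕ) (A B : List α), k < A.length → k < B.length →
    (∀ r < k, A.getD r default = B.getD r default) →
    A.getD k default ≠ B.getD k default →
    (List.Lex (· < ·) A B ↔ A.getD k default < B.getD k default) := by
  intro k
  induction k with
  | zero =>
    intro A B hA hB _ hne
    match A, B with
    | a :: A', b :: B' =>
      simp only [List.getD_cons_zero] at hne ⊢
      constructor
      · intro h
        cases h with
        | rel h => exact h
        | cons h => exact absurd rfl hne
      · intro h; exact List.Lex.rel h
  | succ k ih =>
    intro A B hA hB hagree hne
    match A, B with
    | a :: A', b :: B' =>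
      have hab : a = b := by simpa using hagree 0 (by omega)
      subst hab
      have h1 : k < A'.length := by simpa using hA
      have h2 : k < B'.length := by simpa using hB
      have h3 : ∀ r < k, A'.getD r default = B'.getD r default := by
        intro r hr; simpa using hagree (r + 1) (by omega)
      have h4 : A'.getD k default ≠ B'.getD k default := by simpa using hne
      simp only [List.getD_cons_succ]
      rw [← ih A' B' h1 h2 h3 h4]
      constructor
      · intro h
        cases h with
        | rel h => exact absurd h (lt_irrefl a)
        | cons h => exact h
      · intro h; exact List.Lex.cons h

private lemma infLex_iff_of_firstdiff {U V : ℕ → α} {k : ℕ}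
    (hagree : ∀ r < k, U r = V r) (hne : U k ≠ V k) :
    InfLexLt U V ↔ U k < V k := by
  constructor
  · rintro ⟨n, hag, hlt⟩
    rcases lt_trichotomy n k with h | h | h
    · exact absurd (hagree n h) (ne_of_lt hlt)
    · subst h; exact hlt
    · exact absurd (hag k h) hne
  · intro h; exact ⟨k, hagree, h⟩

private lemma lex_allconst [Inhabited α] {a : α} :
    ∀ {A B : List α}, List.Lex (· < ·) A B →
    (∀ r < B.length, B.getD r default = a) → B.length ≤ A.length →
    ∃ ℓ < B.length, (∀ r < ℓ, A.getD r default = a) ∧ A.getD ℓ default < a := by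
  intro A B h
  induction h with
  | nil => intro _ hlen; simp at hlen
  | @rel x l₁ y l₂ h =>
    intro hB _
    refine ⟨0, by simp, by omega, ?_⟩
    have : y = a := by simpa using hB 0 (by simp)
    simpa [this] using h
  | @cons x l₁ l₂ h ih =>
    intro hB hlen
    have hx : x = a := by simpa using hB 0 (by simp)
    have hB' : ∀ r < l₂.length, l₂.getD r default = a := by
      intro r hr; simpa using hB (r + 1) (by simpa using Nat.succ_lt_succ hr)
    obtain ⟨ℓ, hℓ, hpre, hlt⟩ := ih hB' (by simpa using hlen)
    refine ⟨ℓ + 1, by simpa using Nat.succ_lt_succ hℓ, ?_, by simpa using hlt⟩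
    intro r hr
    cases r with
    | zero => simpa using hx
    | succ s => simpa using hpre s (by omega)

private lemma Qa_of_lex [Inhabited α] {a : α} :
    ∀ {F T : List α}, List.Lex (· < ·) F T → Qa a T → Qa a F := by
  intro F T h
  induction h with
  | nil => intro _ k _ hk; simp at hk
  | @rel x l₁ y l₂ h =>
    intro hQT k hk hklen
    have hy : y ≤ a := by
      have := hQT 0 (by omega) (by simp); simpa using this
    cases k with
    | zero => simp only [List.getD_cons_zero]; exact le_of_lt (lt_of_lt_of_le h hy)
    | succ s =>
      exfalso
      have hx : x = a := by simpa using hk 0 (by omega)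
      have hxlt : x < a := lt_of_lt_of_le h hy
      rw [hx] at hxlt
      exact lt_irrefl a hxlt
  | @cons x l₁ l₂ h ih =>
    intro hQT k hk hklen
    have hx : x ≤ a := by
      have := hQT 0 (by omega) (by simp); simpa using this
    cases k with
    | zero => simpa using hx
    | succ s =>
      have hxa : x = a := by simpa using hk 0 (by omega)
      have hQT' : Qa a l₂ := by
        intro k' hk' hk'len
        have := hQT (k' + 1) ?_ (by simpa using Nat.succ_lt_succ hk'len)
        · simpa using this
        · intro r hr
          cases r with
          | zero => simpa using hxa
          | succ s' => simpa using hk' s' (by omega)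
      have : Qa a l₁ := ih hQT'
      simp only [List.getD_cons_succ]
      exact this s (fun r hr => by simpa using hk (r + 1) (by omega)) (by simpa using hklen)

private lemma Qa_append [Inhabited α] {a : α} {A B : List α}
    (hA : Qa a A) (hB : Qa a B) : Qa a (A ++ B) := by
  intro k hk hklen
  by_cases h : k < A.length
  · rw [getD_append_left h]
    exact hA k (fun r hr => by rw [← getD_append_left (by omega)]; exact hk r hr) h
  · push_neg at h
    have hall : ∀ r < A.length, A.getD r default = a := by
      intro r hr
      rw [← getD_append_left hr]
      exact hk r (by omega)
    have hklen' : k - A.length < B.length := by simp at hklen; omega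
    have hgd : (A ++ B).getD k default = B.getD (k - A.length) default := by
      rw [getDd (by simp; omega), getDd hklen',
        List.getElem_append_right h]
    rw [hgd]
    apply hB _ _ hklen'
    intro r' hr'
    have : (A ++ B).getD (A.length + r') default = B.getD r' default := by
      rw [getDd (by simp; omega), getDd (by omega),
        List.getElem_append_right (by omega)]
      congr 1; omega
    rw [← this]
    exact hk _ (by omega)

private lemma Qa_flatten [Inhabited α] {a : α} :
    ∀ {L : List (List α)}, (∀ F ∈ L, Qa a F) → Qa a L.flatten := by
  intro L
  induction L with
  | nil => intro _ k _ hk; simp at hk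
  | cons F L' ih =>
    intro h
    rw [List.flatten_cons]
    exact Qa_append (h F (by simp)) (ih fun F' hF' => h F' (by simp [hF']))

private lemma appendInf_cons [Inhabited α] (a : α) (v : List α) (W : ℕ → α) :
    appendInf (a :: v) W = consInf a (appendInf v W) := by
  funext n
  cases n with
  | zero => simp [appendInf, consInf]
  | succ m =>
    simp only [appendInf, consInf, List.length_cons, List.getD_cons_succ]
    by_cases h : m < v.length
    · rw [if_pos (by omega), if_pos h]
    · rw [if_neg (by omega), if_neg h]
      congr 1; omega

private lemma omega_conj [Inhabited α] {T : List α} {j : ℕ} (hj : j < T.length) :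
    omegaWord (T.drop j ++ T.take j) = appendInf (T.drop j) (omegaWord T) := by
  funext n
  set m := T.length with hm
  have hT : 0 < m := by omega
  have hnm : n % m < m := Nat.mod_lt _ hT
  have hlen : (T.drop j ++ T.take j).length = m := by simp [hm]; omega
  have hmm : n % m % m = n % m := Nat.mod_mod_of_dvd n (dvd_refl m)
  have hjn : (j + n) % m = (j + n % m) % m := by
    rw [Nat.add_mod j n, Nat.add_mod j (n % m), Nat.mod_eq_of_lt hj, hmm]
  have conjget : ∀ k, k < m → (T.drop j ++ T.take j).getD k default
      = T.getD ((j + k) % m) default := by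
    intro k hk
    by_cases h : k < m - j
    · have h2 : (j + k) % m = j + k := Nat.mod_eq_of_lt (by omega)
      rw [h2, getD_append_left (by simp [hm.symm]; omega), getDd (by simp [hm.symm]; omega),
        getDd (by omega)]
      exact List.getElem_drop
    · have h2 : (j + k) % m = k - (m - j) := by
        rw [Nat.mod_eq_sub_mod (by omega), Nat.mod_eq_of_lt (by omega)]
        omega
      rw [h2, getDd (by rw [hlen]; omega), getDd (by omega),
        List.getElem_append_right (by simp [hm.symm]; omega)]
      simp only [List.getElem_take, List.length_drop]; rfl
  have hR : appendInf (T.drop j) (omegaWord T) n = T.getD ((j + n) % m) default := by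
    simp only [appendInf, omegaWord, List.length_drop, ← hm]
    by_cases h : n < m - j
    · rw [if_pos h, Nat.mod_eq_of_lt (show j + n < m by omega),
        getDd (by simp [hm.symm]; omega), getDd (by omega)]
      exact List.getElem_drop
    · rw [if_neg h]
      congr 1
      push_neg at h
      have h3 : n - (m - j) + m = j + n := by omega
      rw [← h3, Nat.add_mod_right]
  simp only [omegaWord, hlen]
  rw [conjget _ hnm, hR, hjn]

/-- Let `R = T₁⋯T_t` be the Lyndon factorization of `R` with `T₁ ≻ ⋯ ≻ T_t` pairwise
distinct, and let `T_x` be a factor of length at least `2` starting at (0-based)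
position `p` of `R`.  For every position `i` inside `T_x` other than its last position,
the suffix of `R` at `i` is smaller than the suffix at `i + 1` if and only if the
ω-power of the conjugate of `T_x` beginning at position `i` is smaller (as an infinite
word) than the ω-power of the conjugate beginning at position `i + 1`: the L/S type of
every non-final position inside a Lyndon factor is the same, whether computed from the
suffixes or from the conjugates. -/
theorem type_of_inner_position_eq [Inhabited α]
    (Ts : List (List α))
    (hLyn : ∀ w ∈ Ts, IsLyndon w)
    (hdec : Ts.Pairwise (fun a b => List.Lex (· < ·) b a))
    (x : ℕ) (hx : x < Ts.length) (hlen : 2 ≤ (Ts[x]'hx).length)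
    (p : ℕ) (hp : p = ((Ts.take x).map List.length).sum)
    (i : ℕ) (hip : p ≤ i) (hiq : i + 1 < p + (Ts[x]'hx).length) :
    (List.Lex (· < ·) (Ts.flatten.drop i) (Ts.flatten.drop (i + 1)) ↔
      InfLexLt
        (omegaWord ((Ts[x]'hx).drop (i - p) ++ (Ts[x]'hx).take (i - p)))
        (omegaWord ((Ts[x]'hx).drop (i + 1 - p) ++ (Ts[x]'hx).take (i + 1 - p)))) := by
  classical
  set T := Ts[x]'hx with hTdef
  set m := T.length with hmdef
  set j := i - p with hjdef
  have hjm : j < m := by omega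
  have hj1 : j + 1 < m := by omega
  have hi1 : i + 1 - p = j + 1 := by omega
  -- decompose the flatten
  set S := (Ts.drop (x + 1)).flatten with hSdef
  set P := (Ts.take x).flatten with hPdef
  have hdropx : Ts.drop x = T :: Ts.drop (x + 1) := List.drop_eq_getElem_cons hx
  have hflat : Ts.flatten = P ++ (T ++ S) := by
    conv_lhs => rw [← List.take_append_drop x Ts]
    rw [List.flatten_append, hdropx, List.flatten_cons]
  have hPlen : P.length = p := by rw [hPdef, List.length_flatten, hp]
  have hdropi : Ts.flatten.drop i = T.drop j ++ S := by
    rw [hflat, show i = P.length + j by omega, List.drop_length_add_append,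
      List.drop_append_of_le_length (by omega)]
  have hdropi1 : Ts.flatten.drop (i + 1) = T.drop (j + 1) ++ S := by
    rw [hflat, show i + 1 = P.length + (j + 1) by omega, List.drop_length_add_append,
      List.drop_append_of_le_length (by omega)]
  rw [hdropi, hdropi1, hi1, omega_conj hjm, omega_conj hj1]
  set W := omegaWord T with hWdef
  set v := T.drop (j + 1) with hvdef
  set a := T[j]'hjm with hadef
  have hu : T.drop j = a :: v := List.drop_eq_getElem_cons hjm
  rw [hu]
  have hvlen : v.length = m - (j + 1) := by rw [hvdef]; simp [hmdef.symm]
  have hUr : ∀ r < (a :: v).length, appendInf (a :: v) W r = (a :: v).getD r default :=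
    fun r hr => if_pos hr
  have hVr : ∀ r < v.length, appendInf v W r = v.getD r default :=
    fun r hr => if_pos hr
  by_cases hall : ∀ r < v.length, v.getD r default = a
  · -- the conjugate is a constant word: both comparisons are false
    apply iff_of_false
    · -- finite side
      rw [List.cons_append]
      have hQv : Qa a v := fun k hk hklen => le_of_eq (hall k hklen)
      -- j ≥ 1
      have hLynT : IsLyndon T := hLyn T (by rw [hTdef]; exact List.getElem_mem hx)
      have halldrop : ∀ r < (T.drop j).length, (T.drop j).getD r default = a := by
        rw [hu]
        intro r hr
        cases r with
        | zero => simp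
        | succ s =>
          rw [List.getD_cons_succ]
          exact hall s (by simpa using hr)
      have hj0 : 1 ≤ j := by
        by_contra h0
        have hj00 : j = 0 := by omega
        have hvT : v <:+ T := by rw [hvdef]; exact List.drop_suffix _ _
        have hlex : List.Lex (· < ·) T v := by
          apply hLynT.2 v
          · intro hv; apply_fun List.length at hv; rw [hvlen] at hv; simp at hv <;> omega
          · intro hv; apply_fun List.length at hv
            rw [hvlen, ← hmdef] at hv; omega
          · exact hvT
        have hTav : T = a :: v := by rw [← hu, hj00, List.drop_zero]
        rw [hTav] at hlex
        exact notLex_cons a v hQv hlex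
      -- T is lex-smaller than its suffix (drop j T) = a^(m-j)
      have hlexT : List.Lex (· < ·) T (T.drop j) := by
        apply hLynT.2
        · intro hv
          have h9 := congrArg List.length hv
          rw [List.length_drop] at h9; simp at h9; omega
        · intro hv
          have h9 := congrArg List.length hv
          rw [List.length_drop] at h9; omega
        · exact List.drop_suffix _ _
      obtain ⟨ℓ, hℓlen, hℓpre, hℓlt⟩ := lex_allconst hlexT halldrop (by simp)
      have hℓlen' : ℓ < m := by simp [hmdef.symm] at hℓlen; omega
      have hQT : Qa a T := by
        intro k hk hklen
        rcases lt_trichotomy k ℓ with h | h | h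
        · exact le_of_eq (hℓpre k h)
        · subst h; exact le_of_lt hℓlt
        · exact absurd (hk ℓ h) (ne_of_lt hℓlt)
      have hQS : Qa a S := by
        rw [hSdef]
        apply Qa_flatten
        intro F hF
        obtain ⟨y, hy, rfl⟩ := List.mem_iff_getElem.mp hF
        have hgy : (Ts.drop (x + 1))[y] = Ts[x + 1 + y]'(by simp at hy; omega) := by
          rw [List.getElem_drop]
        have hlexF : List.Lex (· < ·) ((Ts.drop (x + 1))[y]) T := by
          rw [hgy, hTdef]
          exact (List.pairwise_iff_getElem.mp hdec) x (x + 1 + y) hx (by simp at hy; omega)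
            (by omega)
        exact Qa_of_lex hlexF hQT
      exact notLex_cons a (v ++ S) (Qa_append hQv hQS)
    · -- infinite side
      rw [appendInf_cons]
      apply notInfLex
      intro k hk
      by_cases hkv : k < v.length
      · rw [hVr k hkv]; exact le_of_eq (hall k hkv)
      · push_neg at hkv
        -- as above we need the structure of T
        have hLynT : IsLyndon T := hLyn T (by rw [hTdef]; exact List.getElem_mem hx)
        have halldrop : ∀ r < (T.drop j).length, (T.drop j).getD r default = a := by
          rw [hu]
          intro r hr
          cases r with
          | zero => simp
          | succ s =>
            rw [List.getD_cons_succ]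
            exact hall s (by simpa using hr)
        have hj0 : 1 ≤ j := by
          by_contra h0
          have hj00 : j = 0 := by omega
          have hQv : Qa a v := fun k hk hklen => le_of_eq (hall k hklen)
          have hlex : List.Lex (· < ·) T v := by
            apply hLynT.2 v
            · intro hv; apply_fun List.length at hv; rw [hvlen] at hv; simp at hv <;> omega
            · intro hv; apply_fun List.length at hv
              rw [hvlen, ← hmdef] at hv; omega
            · rw [hvdef]; exact List.drop_suffix _ _
          have hTav : T = a :: v := by rw [← hu, hj00, List.drop_zero]
          rw [hTav] at hlex
          exact notLex_cons a v hQv hlex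
        have hlexT : List.Lex (· < ·) T (T.drop j) := by
          apply hLynT.2
          · intro hv
            have h9 := congrArg List.length hv
            rw [List.length_drop] at h9; simp at h9; omega
          · intro hv
            have h9 := congrArg List.length hv
            rw [List.length_drop] at h9; omega
          · exact List.drop_suffix _ _
        obtain ⟨ℓ, hℓlen, hℓpre, hℓlt⟩ :=
          lex_allconst hlexT halldrop (by simp)
        have hℓlen' : ℓ < m := by simp [hmdef.symm] at hℓlen; omega
        -- appendInf v W k = T.getD ((k - v.length) % m)
        have hVk : ∀ k' , v.length ≤ k' → appendInf v W k' = T.getD ((k' - v.length) % m) default := by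
          intro k' hk'
          rw [appendInf, if_neg (by omega), hWdef, omegaWord, ← hmdef]
        rw [hVk k hkv]
        set k' := k - v.length with hk'def
        have hWpre : ∀ r' < k', T.getD (r' % m) default = a := by
          intro r' hr'
          have := hk (v.length + r') (by omega)
          rw [hVk _ (by omega)] at this
          simpa using this
        rcases lt_trichotomy k' ℓ with h | h | h
        · rw [Nat.mod_eq_of_lt (by omega)]
          exact le_of_eq (hℓpre k' h)
        · rw [h, Nat.mod_eq_of_lt hℓlen']
          exact le_of_lt hℓlt
        · exfalso
          have := hWpre ℓ h
          rw [Nat.mod_eq_of_lt hℓlen'] at this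
          exact absurd this (ne_of_lt hℓlt)
  · -- there is a first position where the conjugate differs from `a`
    push_neg at hall
    have hex : ∃ k, k < v.length ∧ v.getD k default ≠ a := hall
    set k := Nat.find hex with hkdef
    obtain ⟨hkv, hkne⟩ := Nat.find_spec hex
    have hva : ∀ r < k, v.getD r default = a := by
      intro r hr
      have := Nat.find_min hex hr
      push_neg at this
      exact this (by omega)
    have hav : ∀ r ≤ k, (a :: v).getD r default = a := by
      intro r hr
      cases r with
      | zero => simp
      | succ s => rw [List.getD_cons_succ]; exact hva s (by omega)
    have hkA : k < ((a :: v) ++ S).length := by simp; omega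
    have hkB : k < (v ++ S).length := by simp; omega
    have hagfin : ∀ r < k, ((a :: v) ++ S).getD r default = (v ++ S).getD r default := by
      intro r hr
      rw [getD_append_left (by simp; omega), getD_append_left (by omega),
        hav r (by omega), hva r hr]
    have hnefin : ((a :: v) ++ S).getD k default ≠ (v ++ S).getD k default := by
      rw [getD_append_left (by simp; omega), getD_append_left (by omega), hav k le_rfl]
      exact fun h => hkne h.symm
    have hgoalfin : ((a :: v) ++ S).getD k default = a := by
      rw [getD_append_left (by simp; omega), hav k le_rfl]
    have hvSk : (v ++ S).getD k default = v.getD k default := getD_append_left hkv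
    have hfin : List.Lex (· < ·) ((a :: v) ++ S) (v ++ S) ↔ a < v.getD k default := by
      rw [lex_iff_of_firstdiff k _ _ hkA hkB hagfin hnefin, hgoalfin, hvSk]
    have haginf : ∀ r < k, appendInf (a :: v) W r = appendInf v W r := by
      intro r hr
      rw [hUr r (by simp; omega), hVr r (by omega), hav r (by omega), hva r hr]
    have hneinf : appendInf (a :: v) W k ≠ appendInf v W k := by
      rw [hUr k (by simp; omega), hVr k (by omega), hav k le_rfl]
      exact fun h => hkne h.symm
    have hinf : InfLexLt (appendInf (a :: v) W) (appendInf v W) ↔ a < v.getD k default := by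
      rw [infLex_iff_of_firstdiff haginf hneinf, hUr k (by simp; omega),
        hVr k (by omega), hav k le_rfl]
    rw [hfin, hinf]
end

section
/- If w is a Lyndon word and 1 ≤ i ≤ |w| − 1, then w^ω ≺_lex (conj_i(w))^ω; that is, a Lyndon word is strictly smaller, in the ω-order, than every other conjugate of itself. -/
open List

variable {α : Type*} [LinearOrder α]

lemma lex_exists_pos (d : α) :
    ∀ {w u : List α}, List.Lex (· < ·) w u →
      w <+: u ∨ ∃ ℓ, ℓ < w.length ∧ ℓ < u.length ∧
        (∀ m < ℓ, w.getD m d = u.getD m d) ∧ w.getD ℓ d < u.getD ℓ d := by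
  intro w u h
  induction h with
  | nil => exact Or.inl nil_prefix
  | @rel a l₁ b l₂ hab =>
      exact Or.inr ⟨0, by simp, by simp, fun m hm => by omega, by simpa using hab⟩
  | @cons a l₁ l₂ h ih =>
      rcases ih with hp | ⟨ℓ, h1, h2, h3, h4⟩
      · exact Or.inl ⟨hp.choose, by rw [cons_append, hp.choose_spec]⟩
      · refine Or.inr ⟨ℓ + 1, by simpa using h1, by simpa using h2, ?_, by simpa using h4⟩
        intro m hm
        match m with
        | 0 => simp
        | k + 1 => simpa using h3 k (by omega)

/-- A Lyndon word is strictly smaller, in the ω-order, than every other conjugate of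
itself: `w^ω ≺ (conj_i(w))^ω` for `1 ≤ i ≤ w.length - 1`. -/
theorem lyndon_omega_lt_conjugates [Inhabited α]
    (w : List α) (hw : IsLyndon w) (i : ℕ) (h1 : 1 ≤ i) (h2 : i ≤ w.length - 1) :
    InfLexLt (omegaWord w) (omegaWord (w.drop i ++ w.take i)) := by
  obtain ⟨hne, hlyn⟩ := hw
  have hn : 0 < w.length := length_pos_iff.mpr hne
  have hiw : i < w.length := by omega
  set u := w.drop i with hu
  have hul : u.length = w.length - i := by simp [hu]
  have hune : u ≠ [] := by
    intro h; rw [h] at hul; simp at hul; omega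
  have hunw : u ≠ w := by
    intro h; rw [h] at hul; omega
  have hlex : List.Lex (· < ·) w u := hlyn u hune hunw (drop_suffix i w)
  rcases lex_exists_pos default hlex with hp | ⟨ℓ, hl1, hl2, hl3, hl4⟩
  · have := hp.length_le
    omega
  · have hlen : (u ++ w.take i).length = w.length := by
      simp [hul]; omega
    have key : ∀ m, m < u.length → omegaWord (u ++ w.take i) m = u.getD m default := by
      intro m hm
      have hmw : m < w.length := by omega
      simp only [omegaWord, hlen, Nat.mod_eq_of_lt hmw]
      rw [getD_eq_getElem _ _ (by simp [hlen]; omega), getD_eq_getElem _ _ hm,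
        getElem_append_left hm]
    refine ⟨ℓ, ?_, ?_⟩
    · intro m hm
      rw [key m (by omega)]
      simp only [omegaWord, Nat.mod_eq_of_lt (show m < w.length by omega)]
      exact hl3 m hm
    · rw [key ℓ hl2]
      simpa only [omegaWord, Nat.mod_eq_of_lt (show ℓ < w.length by omega)] using hl4
end
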